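/- For the regularized Kepler vector field Γ' on T(ℝ⁴∖{0}) written in the coordinates Q^k = y^k, 𝒱^k = 2R² v^k (where R² = Σ(y^k)²), the energy function E = 𝒱²/(2R²) − g/R² (with 𝒱² = Σ(𝒱^k)²) is a constant of motion, and on each level set Σ(E) with E < 0 the vector field restricts to 𝒱^k ∂/∂Q^k − 2|E| Q^k ∂/∂𝒱^k, a harmonic oscillator of frequency √(2|E|). -/

import Mathlib

/-- The energy `E(Q,𝒱) = 𝒱²/(2R²) − g/R²` of the regularized Kepler field. -/
noncomputable def keplerEnergy (g : ℝ) (q v : Fin 4 → ℝ) : ℝ :=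
  (∑ k, v k ^ 2) / (2 * ∑ k, q k ^ 2) - g / (∑ k, q k ^ 2)

/-- Along the regularized Kepler field `Γ' = 𝒱ᵏ∂/∂Qᵏ + 2E(Q,𝒱) Qᵏ∂/∂𝒱ᵏ` on
`T(ℝ⁴∖{0})`, the energy `E` is a constant of motion, and on each level set with
`E = E₀ < 0` the field restricts to the harmonic oscillator
`𝒱ᵏ∂/∂Qᵏ − 2|E₀| Qᵏ∂/∂𝒱ᵏ` of frequency `√(2|E₀|)`. -/
theorem stmt_16 (g : ℝ) (hg : 0 < g) (Q V : ℝ → (Fin 4 → ℝ))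
    (hQ0 : ∀ t, (∑ k, Q t k ^ 2) ≠ 0)
    (hQ : ∀ t, HasDerivAt Q (V t) t)
    (hV : ∀ t, HasDerivAt V ((2 * keplerEnergy g (Q t) (V t)) • Q t) t) :
    (∀ t s : ℝ, keplerEnergy g (Q t) (V t) = keplerEnergy g (Q s) (V s)) ∧
    (∀ t : ℝ, ∀ E₀ : ℝ, keplerEnergy g (Q t) (V t) = E₀ → E₀ < 0 →
      HasDerivAt V ((-(2 * |E₀|)) • Q t) t) := by
  constructor
  · -- energy conservation
    have hF : ∀ t : ℝ, HasDerivAt (fun t => keplerEnergy g (Q t) (V t)) 0 t := by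
      intro t
      set E := keplerEnergy g (Q t) (V t) with hE
      have hQk : ∀ k, HasDerivAt (fun t => Q t k) (V t k) t := by
        intro k; exact (hasDerivAt_pi.mp (hQ t)) k
      have hVk : ∀ k, HasDerivAt (fun t => V t k) (2 * E * Q t k) t := by
        intro k; exact (hasDerivAt_pi.mp (hV t)) k
      have hS : HasDerivAt (fun t => ∑ k, Q t k ^ 2) (∑ k, 2 * Q t k * V t k) t := by
        refine HasDerivAt.fun_sum fun k _ => ?_
        simpa using (hQk k).fun_pow 2
      have hP : HasDerivAt (fun t => ∑ k, V t k ^ 2)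
          (∑ k, 2 * V t k * (2 * E * Q t k)) t := by
        refine HasDerivAt.fun_sum fun k _ => ?_
        simpa using (hVk k).fun_pow 2
      have hne : (∑ k, Q t k ^ 2) ≠ 0 := hQ0 t
      have hne2 : (2 * ∑ k, Q t k ^ 2) ≠ 0 := mul_ne_zero two_ne_zero hne
      have hD := ((hP.div (hS.const_mul 2) hne2).sub
        ((hasDerivAt_const t g).div hS hne))
      have key : ((∑ k, 2 * V t k * (2 * E * Q t k)) * (2 * ∑ k, Q t k ^ 2) -
            (∑ k, V t k ^ 2) * (2 * ∑ k, 2 * Q t k * V t k)) / (2 * ∑ k, Q t k ^ 2) ^ 2 -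
            (0 * (∑ k, Q t k ^ 2) - g * (∑ k, 2 * Q t k * V t k)) / (∑ k, Q t k ^ 2) ^ 2
            = 0 := by
        have hEdef : E * (2 * ∑ k, Q t k ^ 2) = (∑ k, V t k ^ 2) - 2 * g := by
          rw [hE]; unfold keplerEnergy; field_simp
        have h1 : (∑ k, 2 * V t k * (2 * E * Q t k)) = 4 * E * ∑ k, Q t k * V t k := by
          rw [Finset.mul_sum]; congr 1; ext k; ring
        have h2 : (∑ k, 2 * Q t k * V t k) = 2 * ∑ k, Q t k * V t k := by
          rw [Finset.mul_sum]; congr 1; ext k; ring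
        have hP' : (∑ k, V t k ^ 2) = E * (2 * ∑ k, Q t k ^ 2) + 2 * g := by
          linarith [hEdef]
        rw [h1, h2, hP']
        field_simp
        ring
      have : HasDerivAt (fun t => keplerEnergy g (Q t) (V t)) _ t := hD
      rw [key] at this
      convert this using 2
    exact is_const_of_deriv_eq_zero (fun t => (hF t).differentiableAt)
      (fun t => (hF t).deriv)
  · intro t E₀ hEt hE₀
    have : -(2 * |E₀|) = 2 * E₀ := by rw [abs_of_neg hE₀]; ring
    rw [this, ← hEt]
    exact hV t
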